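/- Assume the diagonal conditioner ϕ : ℝ → ℝ is differentiable and 1-Lipschitz, and that the coordinates u_1,…,u_d of u are independent with E[u_i] = 0 and E[u_i²] = 1. For u ∈ ℝ^d let J(λ, u) denote the Jacobian of the map λ ↦ T_λ(u) from the parameter space Λ (coordinates m, s, and the strictly lower-triangular entries of L) to ℝ^d. Then E[J(λ,u)ᵀ J(λ,u)] is the diagonal matrix whose block for the m-coordinates is the identity, whose block for the s-coordinates is diag(ϕ'(s_1)², …, ϕ'(s_d)²), and whose block for the L-coordinates is the identity; in particular ‖E[J(λ,u)ᵀ J(λ,u)]‖₂ ≤ 1. -/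

import Mathlib

open MeasureTheory ProbabilityTheory Matrix

noncomputable section

abbrev Euc (d : ℕ) := EuclideanSpace ℝ (Fin d)

/-- Indices of the strictly lower-triangular entries of a `d × d` matrix. -/
abbrev LowIdx (d : ℕ) := {p : Fin d × Fin d // p.2 < p.1}

/-- Index set for the parameters `λ = (m, s, L)` of the full-rank Cholesky
location-scale family. -/
abbrev ParamIdx (d : ℕ) := (Fin d) ⊕ ((Fin d) ⊕ (LowIdx d))

/-- The parameter space `Λ`. -/
abbrev Param (d : ℕ) := EuclideanSpace ℝ (ParamIdx d)

def mOf {d : ℕ} (lam : Param d) (i : Fin d) : ℝ := lam (Sum.inl i)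
def sOf {d : ℕ} (lam : Param d) (i : Fin d) : ℝ := lam (Sum.inr (Sum.inl i))
def LOf {d : ℕ} (lam : Param d) (i j : Fin d) : ℝ :=
  if h : j < i then lam (Sum.inr (Sum.inr ⟨(i, j), h⟩)) else 0

/-- The location-scale reparameterization `T_λ(u) = C u + m` where
`C = diag(ϕ(s₁),…,ϕ(s_d)) + L`. -/
def Tmap {d : ℕ} (ϕ : ℝ → ℝ) (lam : Param d) (u : Fin d → ℝ) : Euc d :=
  WithLp.toLp 2 fun i => mOf lam i + ϕ (sOf lam i) * u i + ∑ j, LOf lam i j * u j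

/-- The Jacobian of `λ ↦ T_λ(u)`, as a `d × (dim Λ)` matrix whose columns are the
partial derivatives of `T_λ(u)` along the coordinates of the parameter space. -/
def Jmat {d : ℕ} (ϕ : ℝ → ℝ) (lam : Param d) (u : Fin d → ℝ) :
    Matrix (Fin d) (ParamIdx d) ℝ :=
  Matrix.of fun i k => fderiv ℝ (fun l => Tmap ϕ l u i) lam (EuclideanSpace.single k 1)

/-- The `ℓ₂` operator norm of a matrix. -/
def l2opNorm {κ ι : Type*} [Fintype κ] [Fintype ι] [DecidableEq ι]
    (A : Matrix κ ι ℝ) : ℝ :=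
  ‖LinearMap.toContinuousLinearMap (Matrix.toEuclideanLin A)‖

def idxOf {d : ℕ} : ParamIdx d → Fin d :=
  Sum.elim id (Sum.elim id (fun p => p.1.1))

def valOf {d : ℕ} (ϕ : ℝ → ℝ) (lam : Param d) (u : Fin d → ℝ) : ParamIdx d → ℝ :=
  Sum.elim (fun _ => 1) (Sum.elim (fun i => deriv ϕ (sOf lam i) * u i) (fun p => u p.1.2))

lemma hasFDerivAt_Tmap {d : ℕ} (ϕ : ℝ → ℝ) (hϕ : Differentiable ℝ ϕ)
    (lam : Param d) (u : Fin d → ℝ) (i : Fin d) :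
    HasFDerivAt (fun l : Param d => Tmap ϕ l u i)
      ((EuclideanSpace.proj (Sum.inl i : ParamIdx d) : Param d →L[ℝ] ℝ)
        + (u i * deriv ϕ (sOf lam i)) •
            (EuclideanSpace.proj (Sum.inr (Sum.inl i) : ParamIdx d) : Param d →L[ℝ] ℝ)
        + ∑ j : Fin d, u j •
            (if h : j < i then
              (EuclideanSpace.proj (Sum.inr (Sum.inr ⟨(i, j), h⟩) : ParamIdx d) : Param d →L[ℝ] ℝ)
             else 0)) lam := by
  have h1 : HasFDerivAt (fun l : Param d => mOf l i)
      (EuclideanSpace.proj (Sum.inl i : ParamIdx d) : Param d →L[ℝ] ℝ) lam := by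
    have he : (fun l : Param d => mOf l i)
        = ⇑(EuclideanSpace.proj (Sum.inl i : ParamIdx d) : Param d →L[ℝ] ℝ) := rfl
    rw [he]
    exact ContinuousLinearMap.hasFDerivAt _
  have h2 : HasFDerivAt (fun l : Param d => ϕ (sOf l i) * u i)
      ((u i * deriv ϕ (sOf lam i)) •
        (EuclideanSpace.proj (Sum.inr (Sum.inl i) : ParamIdx d) : Param d →L[ℝ] ℝ)) lam := by
    have hp : HasFDerivAt (fun l : Param d => sOf l i)
        (EuclideanSpace.proj (Sum.inr (Sum.inl i) : ParamIdx d) : Param d →L[ℝ] ℝ) lam := by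
      have he : (fun l : Param d => sOf l i)
          = ⇑(EuclideanSpace.proj (Sum.inr (Sum.inl i) : ParamIdx d) : Param d →L[ℝ] ℝ) := rfl
      rw [he]
      exact ContinuousLinearMap.hasFDerivAt _
    have hd : HasDerivAt ϕ (deriv ϕ (sOf lam i)) (sOf lam i) := (hϕ _).hasDerivAt
    have := (hd.comp_hasFDerivAt lam hp).mul_const (u i)
    exact this.congr_fderiv (mul_smul _ _ _).symm
  have h3 : ∀ j : Fin d, HasFDerivAt (fun l : Param d => LOf l i j * u j)
      (u j • (if h : j < i then
          (EuclideanSpace.proj (Sum.inr (Sum.inr ⟨(i, j), h⟩) : ParamIdx d) : Param d →L[ℝ] ℝ)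
        else 0)) lam := by
    intro j
    by_cases h : j < i
    · simp only [LOf, dif_pos h]
      have hp : HasFDerivAt (fun l : Param d => l (Sum.inr (Sum.inr ⟨(i, j), h⟩)))
          (EuclideanSpace.proj (Sum.inr (Sum.inr ⟨(i, j), h⟩) : ParamIdx d) : Param d →L[ℝ] ℝ)
          lam := by
        have he : (fun l : Param d => l (Sum.inr (Sum.inr ⟨(i, j), h⟩)))
            = ⇑(EuclideanSpace.proj (Sum.inr (Sum.inr ⟨(i, j), h⟩) : ParamIdx d)
                : Param d →L[ℝ] ℝ) := rfl
        rw [he]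
        exact ContinuousLinearMap.hasFDerivAt _
      have := hp.mul_const (u j)
      convert this using 1
    · simp only [LOf, dif_neg h, zero_mul, smul_zero]
      exact hasFDerivAt_const 0 lam
  exact (h1.add h2).add (HasFDerivAt.fun_sum fun j _ => h3 j)

lemma Jmat_apply {d : ℕ} (ϕ : ℝ → ℝ) (hϕ : Differentiable ℝ ϕ)
    (lam : Param d) (u : Fin d → ℝ) (i : Fin d) (k : ParamIdx d) :
    Jmat ϕ lam u i k = if i = idxOf k then valOf ϕ lam u k else 0 := by
  have hJ := (hasFDerivAt_Tmap ϕ hϕ lam u i).fderiv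
  simp only [Jmat, Matrix.of_apply, hJ]
  rw [ContinuousLinearMap.add_apply, ContinuousLinearMap.add_apply,
    ContinuousLinearMap.smul_apply, ContinuousLinearMap.sum_apply]
  have hproj : ∀ (k' : ParamIdx d),
      (EuclideanSpace.proj k' : Param d →L[ℝ] ℝ) (EuclideanSpace.single k 1)
        = if k' = k then 1 else 0 := by
    intro k'
    simp [EuclideanSpace.single_apply]
  rcases k with a | a | q
  · simp only [hproj, idxOf, valOf, Sum.elim_inl]
    rw [Finset.sum_eq_zero]
    · simp [Sum.inl.injEq, eq_comm]
      split_ifs <;> simp_all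
    · intro j _
      by_cases h : j < i <;> simp [h, apply_dite (fun T : Param d →L[ℝ] ℝ =>
          T (EuclideanSpace.single (Sum.inl a) 1)), hproj]
  · simp only [idxOf, valOf, Sum.elim_inr, Sum.elim_inl, id]
    rw [Finset.sum_eq_zero]
    · simp only [hproj, ContinuousLinearMap.smul_apply]
      by_cases h : i = a <;> simp [h, mul_comm]
    · intro j _
      by_cases h : j < i <;> simp [h, apply_dite (fun T : Param d →L[ℝ] ℝ =>
          T (EuclideanSpace.single (Sum.inr (Sum.inl a)) 1)), hproj]
  · simp only [idxOf, valOf, Sum.elim_inr]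
    simp only [hproj, ContinuousLinearMap.smul_apply]
    simp only [reduceCtorEq, if_false, smul_zero, zero_add, add_zero]
    have hterm : ∀ j : Fin d,
        u j • (if h : j < i then
            (EuclideanSpace.proj (Sum.inr (Sum.inr ⟨(i, j), h⟩) : ParamIdx d) : Param d →L[ℝ] ℝ)
          else 0) (EuclideanSpace.single (Sum.inr (Sum.inr q) : ParamIdx d) 1)
        = if i = q.1.1 ∧ j = q.1.2 then u j else 0 := by
      intro j
      by_cases h : j < i
      · rw [dif_pos h, hproj]
        by_cases he : i = q.1.1 ∧ j = q.1.2
        · have : (⟨(i, j), h⟩ : LowIdx d) = q := by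
            apply Subtype.ext
            simp [Prod.ext_iff, he.1, he.2]
          simp [this, he]
        · have : (Sum.inr (Sum.inr ⟨(i, j), h⟩) : ParamIdx d) ≠ Sum.inr (Sum.inr q) := by
            intro hc
            apply he
            have : (⟨(i, j), h⟩ : LowIdx d) = q := by
              simpa using hc
            have := congrArg Subtype.val this
            exact ⟨congrArg Prod.fst this, congrArg Prod.snd this⟩
          simp [this, he]
      · rw [dif_neg h]
        have : ¬ (i = q.1.1 ∧ j = q.1.2) := by
          rintro ⟨h1, h2⟩
          exact h (h1 ▸ h2 ▸ q.2)
        simp [this]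
    rw [Finset.sum_congr rfl fun j _ => hterm j]
    by_cases h : i = q.1.1
    · simp [h]
    · simp [h]

lemma Jt_mul_J {d : ℕ} (ϕ : ℝ → ℝ) (hϕ : Differentiable ℝ ϕ)
    (lam : Param d) (u : Fin d → ℝ) (k k' : ParamIdx d) :
    ((Jmat ϕ lam u)ᵀ * Jmat ϕ lam u) k k'
      = if idxOf k = idxOf k' then valOf ϕ lam u k * valOf ϕ lam u k' else 0 := by
  simp only [Matrix.mul_apply, Matrix.transpose_apply, Jmat_apply ϕ hϕ]
  simp only [ite_mul, zero_mul, mul_ite, mul_zero]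
  rw [Finset.sum_ite_eq' Finset.univ (idxOf k')]
  by_cases h : idxOf k = idxOf k'
  · simp [h]
  · simp [h, Ne.symm h]


lemma abs_deriv_le {ϕ : ℝ → ℝ} (hϕlip : LipschitzWith 1 ϕ) (x : ℝ) : |deriv ϕ x| ≤ 1 := by
  have h1 : ‖fderiv ℝ ϕ x‖ ≤ ((1 : NNReal) : ℝ) := norm_fderiv_le_of_lipschitz ℝ hϕlip
  calc |deriv ϕ x| = ‖(fderiv ℝ ϕ x) 1‖ := by rw [fderiv_apply_one_eq_deriv]; exact (Real.norm_eq_abs _).symm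
    _ ≤ ‖fderiv ℝ ϕ x‖ * ‖(1 : ℝ)‖ := (fderiv ℝ ϕ x).le_opNorm 1
    _ ≤ 1 := by simpa using h1

lemma l2opNorm_diagonal_le {ι : Type*} [Fintype ι] [DecidableEq ι]
    (v : ι → ℝ) (hv : ∀ k, |v k| ≤ 1) : l2opNorm (Matrix.diagonal v) ≤ 1 := by
  unfold l2opNorm
  refine ContinuousLinearMap.opNorm_le_bound _ zero_le_one fun x => ?_
  rw [one_mul]
  have hcoe : (LinearMap.toContinuousLinearMap (Matrix.toEuclideanLin (Matrix.diagonal v))) x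
      = Matrix.toEuclideanLin (Matrix.diagonal v) x := rfl
  rw [hcoe]
  have hx : ∀ i, (Matrix.toEuclideanLin (Matrix.diagonal v) x) i = v i * x i := by
    intro i
    rw [Matrix.toEuclideanLin_apply]
    simp [Matrix.mulVec_diagonal]
  rw [EuclideanSpace.norm_eq, EuclideanSpace.norm_eq]
  apply Real.sqrt_le_sqrt
  apply Finset.sum_le_sum
  intro i _
  rw [hx]
  have h1 : |v i * x i| ≤ |x i| := by
    rw [abs_mul]
    exact mul_le_of_le_one_left (abs_nonneg _) (hv i)
  simp only [Real.norm_eq_abs]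
  exact pow_le_pow_left₀ (abs_nonneg _) h1 2

section main

variable {d : ℕ} {Ω : Type*} [MeasurableSpace Ω] (μ : Measure Ω) [IsProbabilityMeasure μ]

lemma integral_uu (u : Ω → Fin d → ℝ)
    (hindep : iIndepFun (fun i ω => u ω i) μ)
    (hmean : ∀ i, ∫ ω, u ω i ∂μ = 0)
    (hvar : ∀ i, ∫ ω, (u ω i) ^ 2 ∂μ = 1)
    (hint1 : ∀ i, Integrable (fun ω => u ω i) μ)
    (a b : Fin d) :
    ∫ ω, u ω a * u ω b ∂μ = if a = b then 1 else 0 := by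
  by_cases h : a = b
  · subst h
    rw [if_pos rfl]
    have : ∀ ω, u ω a * u ω a = (u ω a) ^ 2 := fun ω => (sq (u ω a)).symm
    simp only [this]
    exact hvar a
  · rw [if_neg h]
    have hi : IndepFun (fun ω => u ω a) (fun ω => u ω b) μ := hindep.indepFun h
    have := hi.integral_mul_eq_mul_integral (hint1 a).1 (hint1 b).1
    have h0 : (∫ ω, u ω a * u ω b ∂μ)
        = integral μ ((fun ω => u ω a) * fun ω => u ω b) := rfl
    rw [h0, this, hmean a, zero_mul]

end main

/-- For a differentiable `1`-Lipschitz diagonal conditioner `ϕ` and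
`u` with independent, centered, unit-variance coordinates, `E[J(λ,u)ᵀ J(λ,u)]` is the
diagonal matrix whose `m`-block is the identity, whose `s`-block is
`diag(ϕ'(s₁)², …, ϕ'(s_d)²)`, and whose `L`-block is the identity; in particular its
`ℓ₂` operator norm is at most `1`. -/
theorem expected_squared_jacobian
    {d : ℕ} {Ω : Type*} [MeasurableSpace Ω] (μ : Measure Ω) [IsProbabilityMeasure μ]
    (u : Ω → Fin d → ℝ) (ϕ : ℝ → ℝ)
    (hϕdiff : Differentiable ℝ ϕ) (hϕlip : LipschitzWith 1 ϕ)
    (hmeas : ∀ i, Measurable fun ω => u ω i)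
    (hindep : iIndepFun (fun i ω => u ω i) μ)
    (hmean : ∀ i, ∫ ω, u ω i ∂μ = 0)
    (hvar : ∀ i, ∫ ω, (u ω i) ^ 2 ∂μ = 1)
    (hint1 : ∀ i, Integrable (fun ω => u ω i) μ)
    (hint2 : ∀ i, Integrable (fun ω => (u ω i) ^ 2) μ)
    (lam : Param d) :
    (Matrix.of fun k k' =>
        ∫ ω, ((Jmat ϕ lam (u ω))ᵀ * Jmat ϕ lam (u ω)) k k' ∂μ)
      = Matrix.diagonal
          (Sum.elim (fun _ : Fin d => (1 : ℝ))
            (Sum.elim (fun i : Fin d => (deriv ϕ (sOf lam i)) ^ 2)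
              (fun _ : LowIdx d => (1 : ℝ)))) ∧
    l2opNorm
      (Matrix.of fun k k' =>
        ∫ ω, ((Jmat ϕ lam (u ω))ᵀ * Jmat ϕ lam (u ω)) k k' ∂μ) ≤ 1 := by
  set D : ParamIdx d → ℝ :=
    Sum.elim (fun _ : Fin d => (1 : ℝ))
      (Sum.elim (fun i : Fin d => (deriv ϕ (sOf lam i)) ^ 2)
        (fun _ : LowIdx d => (1 : ℝ))) with hD
  have hEuu := integral_uu μ u hindep hmean hvar hint1
  have hmain : (Matrix.of fun k k' =>
      ∫ ω, ((Jmat ϕ lam (u ω))ᵀ * Jmat ϕ lam (u ω)) k k' ∂μ) = Matrix.diagonal D := by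
    ext k k'
    rw [Matrix.of_apply]
    simp only [Jt_mul_J ϕ hϕdiff lam]
    by_cases hidx : idxOf k = idxOf k'
    swap
    · simp only [if_neg hidx, integral_zero]
      rw [Matrix.diagonal_apply_ne _ (fun hc => hidx (by rw [hc]))]
    · simp only [if_pos hidx]
      rcases k with a | a | p <;> rcases k' with b | b | q <;>
        simp only [idxOf, Sum.elim_inl, Sum.elim_inr, id] at hidx
      · -- inl inl
        subst hidx
        simp [valOf, Matrix.diagonal_apply_eq, hD]
      · -- inl, inr inl
        subst hidx
        simp only [valOf, Sum.elim_inl, Sum.elim_inr, one_mul]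
        rw [Matrix.diagonal_apply_ne _ (by simp)]
        rw [integral_const_mul, hmean, mul_zero]
      · -- inl, inr inr
        subst hidx
        simp only [valOf, Sum.elim_inl, Sum.elim_inr, one_mul]
        rw [Matrix.diagonal_apply_ne _ (by simp)]
        exact hmean _
      · -- inr inl, inl
        subst hidx
        simp only [valOf, Sum.elim_inl, Sum.elim_inr, mul_one]
        rw [Matrix.diagonal_apply_ne _ (by simp)]
        rw [integral_const_mul, hmean, mul_zero]
      · -- inr inl, inr inl
        subst hidx
        simp only [valOf, Sum.elim_inr, Sum.elim_inl]
        rw [Matrix.diagonal_apply_eq]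
        have : ∀ ω, (deriv ϕ (sOf lam a) * u ω a) * (deriv ϕ (sOf lam a) * u ω a)
            = (deriv ϕ (sOf lam a)) ^ 2 * (u ω a) ^ 2 := fun ω => by ring
        simp only [this]
        rw [integral_const_mul, hvar, mul_one]
        simp [hD]
      · -- inr inl, inr inr
        subst hidx
        simp only [valOf, Sum.elim_inr, Sum.elim_inl]
        rw [Matrix.diagonal_apply_ne _ (by simp)]
        have : ∀ ω, (deriv ϕ (sOf lam q.1.1) * u ω q.1.1) * u ω q.1.2
            = deriv ϕ (sOf lam q.1.1) * (u ω q.1.1 * u ω q.1.2) := fun ω => by ring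
        simp only [this]
        rw [integral_const_mul, hEuu, if_neg (ne_of_gt q.2), mul_zero]
      · -- inr inr, inl
        subst hidx
        simp only [valOf, Sum.elim_inr, Sum.elim_inl, mul_one]
        rw [Matrix.diagonal_apply_ne _ (by simp)]
        exact hmean _
      · -- inr inr, inr inl
        subst hidx
        simp only [valOf, Sum.elim_inr, Sum.elim_inl]
        rw [Matrix.diagonal_apply_ne _ (by simp)]
        have : ∀ ω, u ω p.1.2 * (deriv ϕ (sOf lam p.1.1) * u ω p.1.1)
            = deriv ϕ (sOf lam p.1.1) * (u ω p.1.1 * u ω p.1.2) := fun ω => by ring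
        simp only [this]
        rw [integral_const_mul, hEuu, if_neg (ne_of_gt p.2), mul_zero]
      · -- inr inr, inr inr
        simp only [valOf, Sum.elim_inr]
        rw [hEuu]
        by_cases h2 : p.1.2 = q.1.2
        · have hpq : p = q := Subtype.ext (Prod.ext hidx h2)
          subst hpq
          simp [hD]
        · rw [if_neg h2]
          rw [Matrix.diagonal_apply_ne _ (fun hc => h2 (by
            have hpq : p = q := by simpa using hc
            rw [hpq]))]
  refine ⟨hmain, ?_⟩
  rw [hmain]
  apply l2opNorm_diagonal_le
  intro k
  rcases k with a | a | p
  · simp [hD]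
  · simp only [hD, Sum.elim_inr, Sum.elim_inl]
    rw [abs_of_nonneg (sq_nonneg _), sq]
    calc deriv ϕ (sOf lam a) * deriv ϕ (sOf lam a)
        ≤ |deriv ϕ (sOf lam a)| * |deriv ϕ (sOf lam a)| := by
          rw [← abs_mul]; exact le_abs_self _
      _ ≤ 1 * 1 := by
          have := abs_deriv_le hϕlip (sOf lam a)
          exact mul_le_mul this this (abs_nonneg _) zero_le_one
      _ = 1 := one_mul 1
  · simp [hD]

end
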